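/- Suppose in addition that m_x(t,x) ≠ 0 for every (t,x) ∈ U. If β ≡ 0 on U, then α ≡ 0 on U; and if α ≡ 0 on U, then β ≡ 0 on U (Corollary 5.1: in a region with strictly varying entropy there are no pure forward or pure backward waves). -/

import Mathlib

open Real

/-- Partial derivative with respect to `t` (the first coordinate). -/
noncomputable def pdt (f : ℝ × ℝ → ℝ) (pt : ℝ × ℝ) : ℝ := fderiv ℝ f pt (1, 0)

/-- Partial derivative with respect to `x` (the second coordinate). -/
noncomputable def pdx (f : ℝ × ℝ → ℝ) (pt : ℝ × ℝ) : ℝ := fderiv ℝ f pt (0, 1)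

section helpers
variable {f g : ℝ × ℝ → ℝ} {pt v : ℝ × ℝ}

private lemma pdv_add (hf : DifferentiableAt ℝ f pt) (hg : DifferentiableAt ℝ g pt) :
    fderiv ℝ (fun q => f q + g q) pt v = fderiv ℝ f pt v + fderiv ℝ g pt v := by
  rw [fderiv_fun_add hf hg]; simp

private lemma pdv_mul (hf : DifferentiableAt ℝ f pt) (hg : DifferentiableAt ℝ g pt) :
    fderiv ℝ (fun q => f q * g q) pt v = fderiv ℝ f pt v * g pt + f pt * fderiv ℝ g pt v := by
  rw [fderiv_fun_mul hf hg]; simp; ring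

private lemma pdv_const_mul (a : ℝ) (hg : DifferentiableAt ℝ g pt) :
    fderiv ℝ (fun q => a * g q) pt v = a * fderiv ℝ g pt v := by
  rw [fderiv_const_mul hg a]; simp

private lemma pdv_neg :
    fderiv ℝ (fun q => -f q) pt v = -fderiv ℝ f pt v := by
  rw [fderiv_fun_neg]; simp

private lemma pdv_rpow (r : ℝ) (hf : DifferentiableAt ℝ f pt) (h0 : f pt ≠ 0) :
    fderiv ℝ (fun q => f q ^ r) pt v = r * f pt ^ (r - 1) * fderiv ℝ f pt v := by
  rw [(hf.hasFDerivAt.rpow_const (Or.inl h0)).fderiv]; simp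

private lemma pdx_add (hf : DifferentiableAt ℝ f pt) (hg : DifferentiableAt ℝ g pt) :
    pdx (fun q => f q + g q) pt = pdx f pt + pdx g pt := pdv_add hf hg
private lemma pdx_mul (hf : DifferentiableAt ℝ f pt) (hg : DifferentiableAt ℝ g pt) :
    pdx (fun q => f q * g q) pt = pdx f pt * g pt + f pt * pdx g pt := pdv_mul hf hg
private lemma pdx_const_mul (a : ℝ) (hg : DifferentiableAt ℝ g pt) :
    pdx (fun q => a * g q) pt = a * pdx g pt := pdv_const_mul a hg
private lemma pdx_neg : pdx (fun q => -f q) pt = -pdx f pt := pdv_neg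
private lemma pdx_rpow (r : ℝ) (hf : DifferentiableAt ℝ f pt) (h0 : f pt ≠ 0) :
    pdx (fun q => f q ^ r) pt = r * f pt ^ (r - 1) * pdx f pt := pdv_rpow r hf h0

private lemma pdt_add (hf : DifferentiableAt ℝ f pt) (hg : DifferentiableAt ℝ g pt) :
    pdt (fun q => f q + g q) pt = pdt f pt + pdt g pt := pdv_add hf hg
private lemma pdt_mul (hf : DifferentiableAt ℝ f pt) (hg : DifferentiableAt ℝ g pt) :
    pdt (fun q => f q * g q) pt = pdt f pt * g pt + f pt * pdt g pt := pdv_mul hf hg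
private lemma pdt_const_mul (a : ℝ) (hg : DifferentiableAt ℝ g pt) :
    pdt (fun q => a * g q) pt = a * pdt g pt := pdv_const_mul a hg

private lemma pdx_congr {U : Set (ℝ × ℝ)} (hU : IsOpen U) (hpt : pt ∈ U)
    (h : ∀ q ∈ U, f q = g q) : pdx f pt = pdx g pt := by
  unfold pdx
  rw [Filter.EventuallyEq.fderiv_eq (by filter_upwards [hU.mem_nhds hpt] with q hq using h q hq)]

private lemma pdt_congr {U : Set (ℝ × ℝ)} (hU : IsOpen U) (hpt : pt ∈ U)
    (h : ∀ q ∈ U, f q = g q) : pdt f pt = pdt g pt := by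
  unfold pdt
  rw [Filter.EventuallyEq.fderiv_eq (by filter_upwards [hU.mem_nhds hpt] with q hq using h q hq)]

private lemma pd_zero_of_eq_zero {U : Set (ℝ × ℝ)} (hU : IsOpen U) (hpt : pt ∈ U)
    (h : ∀ q ∈ U, f q = 0) : pdt f pt = 0 ∧ pdx f pt = 0 := by
  have h1 : fderiv ℝ f pt = fderiv ℝ (fun _ => (0:ℝ)) pt :=
    Filter.EventuallyEq.fderiv_eq (by filter_upwards [hU.mem_nhds hpt] with q hq using h q hq)
  rw [fderiv_fun_const] at h1
  refine ⟨?_, ?_⟩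
  · unfold pdt; rw [h1]; simp
  · unfold pdx; rw [h1]; simp

private lemma diff_pdx (hf : DifferentiableAt ℝ (fderiv ℝ f) pt) :
    DifferentiableAt ℝ (fun q => pdx f q) pt := by
  unfold pdx; exact hf.clm_apply (differentiableAt_const _)

private lemma pdt_pdx_comm (hf2 : ContDiffAt ℝ 2 f pt)
    (hfd : DifferentiableAt ℝ (fderiv ℝ f) pt) :
    pdt (fun q => pdx f q) pt = pdx (fun q => pdt f q) pt := by
  have hs := hf2.isSymmSndFDerivAt (by simp [minSmoothness_of_isRCLikeNormedField])
  unfold pdt pdx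
  rw [fderiv_clm_apply hfd (differentiableAt_const _),
    fderiv_clm_apply hfd (differentiableAt_const _)]
  simp
  exact hs _ _

end helpers

private lemma key (Kc κ ν : ℝ) (hKc : 0 < Kc) (hκ : κ ≠ 1)
    (U : Set (ℝ × ℝ)) (hU : IsOpen U)
    (u z m : ℝ × ℝ → ℝ)
    (hu : ContDiffOn ℝ 2 u U) (hz : ContDiffOn ℝ 2 z U) (hm : ContDiffOn ℝ 2 m U)
    (hzpos : ∀ q ∈ U, 0 < z q)
    (heq1 : ∀ q ∈ U, pdt z q = -((Kc * z q ^ ν) * pdx u q))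
    (heq2 : ∀ q ∈ U, pdt u q =
      -(((Kc * (m q * m q)) * z q ^ ν) * pdx z q + (((κ * Kc) * m q) * z q ^ (ν + 1)) * pdx m q))
    (heq3 : ∀ q ∈ U, pdt m q = 0)
    (ε : ℝ) (hε : ε = 1 ∨ ε = -1)
    (hw : ∀ q ∈ U, pdx u q + ε * (m q * pdx z q + (κ * pdx m q) * z q) = 0)
    (pt : ℝ × ℝ) (hpt : pt ∈ U) (hmx : pdx m pt ≠ 0) :
    pdx u pt = 0 ∧ m pt * pdx z pt + (κ * pdx m pt) * z pt = 0 := by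
  have hUn : U ∈ nhds pt := hU.mem_nhds hpt
  have hZ : 0 < z pt := hzpos pt hpt
  have hZne : z pt ≠ 0 := hZ.ne'
  -- basic differentiability
  have hu2 : ContDiffAt ℝ 2 u pt := (hu pt hpt).contDiffAt hUn
  have hz2 : ContDiffAt ℝ 2 z pt := (hz pt hpt).contDiffAt hUn
  have hm2 : ContDiffAt ℝ 2 m pt := (hm pt hpt).contDiffAt hUn
  have du : DifferentiableAt ℝ u pt := hu2.differentiableAt two_ne_zero
  have dz : DifferentiableAt ℝ z pt := hz2.differentiableAt two_ne_zero
  have dm : DifferentiableAt ℝ m pt := hm2.differentiableAt two_ne_zero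
  have dfu : DifferentiableAt ℝ (fderiv ℝ u) pt :=
    (((hu.fderiv_of_isOpen hU (m := 1) (by norm_num)) pt hpt).contDiffAt hUn).differentiableAt one_ne_zero
  have dfz : DifferentiableAt ℝ (fderiv ℝ z) pt :=
    (((hz.fderiv_of_isOpen hU (m := 1) (by norm_num)) pt hpt).contDiffAt hUn).differentiableAt one_ne_zero
  have dfm : DifferentiableAt ℝ (fderiv ℝ m) pt :=
    (((hm.fderiv_of_isOpen hU (m := 1) (by norm_num)) pt hpt).contDiffAt hUn).differentiableAt one_ne_zero
  have dpu : DifferentiableAt ℝ (fun q => pdx u q) pt := diff_pdx dfu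
  have dpz : DifferentiableAt ℝ (fun q => pdx z q) pt := diff_pdx dfz
  have dpm : DifferentiableAt ℝ (fun q => pdx m q) pt := diff_pdx dfm
  have dzpow : DifferentiableAt ℝ (fun q => z q ^ ν) pt := dz.rpow_const (Or.inl hZne)
  have dzpow1 : DifferentiableAt ℝ (fun q => z q ^ (ν + 1)) pt := dz.rpow_const (Or.inl hZne)
  -- abbreviations (as plain terms)
  -- second derivatives
  -- E3 : value of w at pt
  have E3 : pdx u pt + ε * (m pt * pdx z pt + (κ * pdx m pt) * z pt) = 0 := hw pt hpt
  -- E2 : x-derivative of w at pt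
  have hwzero := pd_zero_of_eq_zero hU hpt hw
  have dK1 : DifferentiableAt ℝ (fun q => κ * pdx m q) pt := dpm.const_mul κ
  have dw2 : DifferentiableAt ℝ (fun q => m q * pdx z q + (κ * pdx m q) * z q) pt :=
    (dm.mul dpz).add (dK1.mul dz)
  have E2 : pdx (fun q => pdx u q) pt
      + ε * ((pdx m pt * pdx z pt + m pt * pdx (fun q => pdx z q) pt)
        + ((κ * pdx (fun q => pdx m q) pt) * z pt + (κ * pdx m pt) * pdx z pt)) = 0 := by
    have h := hwzero.2
    rw [pdx_add dpu (dw2.const_mul ε), pdx_const_mul ε dw2,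
      pdx_add (dm.fun_mul dpz) (dK1.fun_mul dz), pdx_mul dm dpz, pdx_mul dK1 dz,
      pdx_const_mul κ dpm] at h
    exact h
  -- E1 : t-derivative of w at pt
  have E1 : pdt (fun q => pdx u q) pt
      + ε * ((pdt m pt * pdx z pt + m pt * pdt (fun q => pdx z q) pt)
        + ((κ * pdt (fun q => pdx m q) pt) * z pt + (κ * pdx m pt) * pdt z pt)) = 0 := by
    have h := hwzero.1
    rw [pdt_add dpu (dw2.const_mul ε), pdt_const_mul ε dw2,
      pdt_add (dm.fun_mul dpz) (dK1.fun_mul dz), pdt_mul dm dpz, pdt_mul dK1 dz,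
      pdt_const_mul κ dpm] at h
    exact h
  -- mixed partials
  have h5 : pdt m pt = 0 := heq3 pt hpt
  have h3 : pdt (fun q => pdx m q) pt = 0 := by
    rw [pdt_pdx_comm hm2 dfm]
    exact (pd_zero_of_eq_zero hU hpt heq3).2
  have h4 : pdt z pt = -((Kc * z pt ^ ν) * pdx u pt) := heq1 pt hpt
  have h2 : pdt (fun q => pdx z q) pt
      = -((Kc * (ν * z pt ^ (ν - 1) * pdx z pt)) * pdx u pt
          + (Kc * z pt ^ ν) * pdx (fun q => pdx u q) pt) := by
    rw [pdt_pdx_comm hz2 dfz, pdx_congr hU hpt heq1]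
    have dKz : DifferentiableAt ℝ (fun q => Kc * z q ^ ν) pt := dzpow.const_mul Kc
    rw [pdx_neg, pdx_mul dKz dpu, pdx_const_mul Kc dzpow, pdx_rpow ν dz hZne]
  have h1 : pdt (fun q => pdx u q) pt
      = -(((Kc * (pdx m pt * m pt + m pt * pdx m pt)) * z pt ^ ν
            + (Kc * (m pt * m pt)) * (ν * z pt ^ (ν - 1) * pdx z pt)) * pdx z pt
          + ((Kc * (m pt * m pt)) * z pt ^ ν) * pdx (fun q => pdx z q) pt
          + ((((κ * Kc) * pdx m pt) * z pt ^ (ν + 1)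
            + ((κ * Kc) * m pt) * ((ν + 1) * z pt ^ ν * pdx z pt)) * pdx m pt
          + (((κ * Kc) * m pt) * z pt ^ (ν + 1)) * pdx (fun q => pdx m q) pt)) := by
    rw [pdt_pdx_comm hu2 dfu, pdx_congr hU hpt heq2]
    have dmm : DifferentiableAt ℝ (fun q => Kc * (m q * m q)) pt := (dm.mul dm).const_mul Kc
    have dmmz : DifferentiableAt ℝ (fun q => (Kc * (m q * m q)) * z q ^ ν) pt := dmm.mul dzpow
    have dkm : DifferentiableAt ℝ (fun q => (κ * Kc) * m q) pt := dm.const_mul (κ * Kc)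
    have dkmz : DifferentiableAt ℝ (fun q => ((κ * Kc) * m q) * z q ^ (ν + 1)) pt :=
      dkm.mul dzpow1
    rw [pdx_neg, pdx_add (dmmz.fun_mul dpz) (dkmz.fun_mul dpm), pdx_mul dmmz dpz, pdx_mul dmm dzpow,
      pdx_const_mul Kc (dm.fun_mul dm), pdx_mul dm dm, pdx_rpow ν dz hZne,
      pdx_mul dkmz dpm, pdx_mul dkm dzpow1, pdx_const_mul (κ * Kc) dm,
      pdx_rpow (ν + 1) dz hZne]
    ring_nf
  -- substitute
  rw [h1, h2, h3, h4, h5] at E1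
  -- power identities
  have hQ : z pt ^ (ν - 1) * z pt = z pt ^ ν := by
    rw [← Real.rpow_add_one hZne (ν - 1)]; ring_nf
  have hPZ : z pt ^ (ν + 1) = z pt ^ ν * z pt := Real.rpow_add_one hZne ν
  rw [hPZ] at E1
  -- main algebraic identity
  have T : (κ - 1) * Kc * z pt ^ ν * pdx m pt * (m pt * pdx z pt + κ * pdx m pt * z pt)
      = 0 := by
    rcases hε with rfl | rfl
    · linear_combination E1 + (Kc * m pt * z pt ^ ν) * E2
        + (Kc * (ν * m pt * z pt ^ (ν - 1) * pdx z pt + κ * z pt ^ ν * pdx m pt)) * E3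
        - (ν * κ * Kc * m pt * pdx m pt * pdx z pt) * hQ
    · linear_combination E1 - (Kc * m pt * z pt ^ ν) * E2
        - (Kc * (ν * m pt * z pt ^ (ν - 1) * pdx z pt + κ * z pt ^ ν * pdx m pt)) * E3
        - (ν * κ * Kc * m pt * pdx m pt * pdx z pt) * hQ
  have hfac : (κ - 1) * Kc * z pt ^ ν * pdx m pt ≠ 0 :=
    mul_ne_zero (mul_ne_zero (mul_ne_zero (sub_ne_zero.2 hκ) hKc.ne')
      (Real.rpow_pos_of_pos hZ ν).ne') hmx
  have hA : m pt * pdx z pt + (κ * pdx m pt) * z pt = 0 := by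
    rcases mul_eq_zero.1 T with h | h
    · exact absurd h hfac
    · linarith [h]
  refine ⟨?_, hA⟩
  rcases hε with rfl | rfl <;> linarith [E3, hA]

/-- Corollary 5.1: if `m_x ≠ 0` on `U`, then `β ≡ 0` on `U` implies `α ≡ 0` on `U`,
and `α ≡ 0` on `U` implies `β ≡ 0` on `U`. -/
theorem stmt_5
    (γ Kc : ℝ) (hγ : 1 < γ) (hKc : 0 < Kc)
    (U : Set (ℝ × ℝ)) (hU : IsOpen U)
    (u z m : ℝ × ℝ → ℝ)
    (hu : ContDiffOn ℝ 2 u U) (hz : ContDiffOn ℝ 2 z U) (hm : ContDiffOn ℝ 2 m U)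
    (hzpos : ∀ pt ∈ U, 0 < z pt) (hmpos : ∀ pt ∈ U, 0 < m pt)
    (c p : ℝ × ℝ → ℝ)
    (hc : c = fun pt => Kc * m pt * z pt ^ ((γ + 1) / (γ - 1)))
    (hp : p = fun pt => ((γ - 1) / (2 * γ) * Kc) * (m pt) ^ 2 * z pt ^ (2 * γ / (γ - 1)))
    (heq1 : ∀ pt ∈ U, pdt z pt + (c pt / m pt) * pdx u pt = 0)
    (heq2 : ∀ pt ∈ U, pdt u pt + m pt * c pt * pdx z pt + 2 * (p pt / m pt) * pdx m pt = 0)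
    (heq3 : ∀ pt ∈ U, pdt m pt = 0)
    (α β : ℝ × ℝ → ℝ)
    (hα : α = fun pt => pdx u pt + m pt * pdx z pt + ((γ - 1) / γ) * pdx m pt * z pt)
    (hβ : β = fun pt => pdx u pt - m pt * pdx z pt - ((γ - 1) / γ) * pdx m pt * z pt)
    (hmx : ∀ pt ∈ U, pdx m pt ≠ 0) :
    ((∀ pt ∈ U, β pt = 0) → ∀ pt ∈ U, α pt = 0) ∧
      ((∀ pt ∈ U, α pt = 0) → ∀ pt ∈ U, β pt = 0) := by
  have hγ0 : (0:ℝ) < γ := by linarith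
  have hγ1 : γ - 1 ≠ 0 := by intro h; apply hγ.ne'; linarith
  set κ : ℝ := (γ - 1) / γ with hκdef
  set ν : ℝ := (γ + 1) / (γ - 1) with hνdef
  have hκ1 : κ ≠ 1 := by
    rw [hκdef]; intro h
    rw [div_eq_one_iff_eq hγ0.ne'] at h
    linarith
  have hexp : 2 * γ / (γ - 1) = ν + 1 := by
    rw [hνdef]; field_simp; ring
  -- rewrite the equations into the normalized forms needed by `key`
  have heq1' : ∀ q ∈ U, pdt z q = -((Kc * z q ^ ν) * pdx u q) := by
    intro q hq
    have h := heq1 q hq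
    simp only [hc] at h
    have hm0 : m q ≠ 0 := (hmpos q hq).ne'
    have hdiv : Kc * m q * z q ^ ν / m q = Kc * z q ^ ν := by field_simp
    rw [hdiv] at h
    linear_combination h
  have heq2' : ∀ q ∈ U, pdt u q =
      -(((Kc * (m q * m q)) * z q ^ ν) * pdx z q + (((κ * Kc) * m q) * z q ^ (ν + 1)) * pdx m q) := by
    intro q hq
    have h := heq2 q hq
    simp only [hc, hp] at h
    simp only [hexp] at h
    have hm0 : m q ≠ 0 := (hmpos q hq).ne'
    have hdiv : (γ - 1) / (2 * γ) * Kc * m q ^ 2 * z q ^ (ν + 1) / m q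
        = (κ / 2 * Kc) * m q * z q ^ (ν + 1) := by
      rw [hκdef]; field_simp
    rw [hdiv] at h
    linear_combination h
  constructor
  · intro hb q hq
    have hw : ∀ q ∈ U, pdx u q + (-1) * (m q * pdx z q + (κ * pdx m q) * z q) = 0 := by
      intro q hq
      have := hb q hq
      rw [hβ] at this
      linear_combination this
    obtain ⟨h1, h2⟩ := key Kc κ ν hKc hκ1 U hU u z m hu hz hm hzpos heq1' heq2' heq3
      (-1) (Or.inr rfl) hw q hq (hmx q hq)
    rw [hα]
    linear_combination h1 + h2
  · intro ha q hq
    have hw : ∀ q ∈ U, pdx u q + 1 * (m q * pdx z q + (κ * pdx m q) * z q) = 0 := by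
      intro q hq
      have := ha q hq
      rw [hα] at this
      linear_combination this
    obtain ⟨h1, h2⟩ := key Kc κ ν hKc hκ1 U hU u z m hu hz hm hzpos heq1' heq2' heq3
      1 (Or.inl rfl) hw q hq (hmx q hq)
    rw [hβ]
    linear_combination h1 - h2
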